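/- For every non-negative integer n, the partition function satisfies p(7n + 5) ≡ 0 (mod 7). -/

import Mathlib

section ArchivePart
open PowerSeries

namespace Theorems100

noncomputable section

variable {α : Type*}

open Finset

open scoped Classical

/-- The partial product for the generating function for odd partitions.
TODO: As `m` tends to infinity, this converges (in the `X`-adic topology).

If `m` is sufficiently large, the `i`th coefficient gives the number of odd partitions of the
natural number `i`: proved in `oddGF_prop`.
It is stated for an arbitrary field `α`, though it usually suffices to use `ℚ` or `ℝ`.
-/
def partialOddGF (m : ℕ) [Field α] :=
  ∏ i ∈ range m, (1 - (X : PowerSeries α) ^ (2 * i + 1))⁻¹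

/-- The partial product for the generating function for distinct partitions.
TODO: As `m` tends to infinity, this converges (in the `X`-adic topology).

If `m` is sufficiently large, the `i`th coefficient gives the number of distinct partitions of the
natural number `i`: proved in `distinctGF_prop`.
It is stated for an arbitrary commutative semiring `α`, though it usually suffices to use `ℕ`, `ℚ`
or `ℝ`.
-/
def partialDistinctGF (m : ℕ) [CommSemiring α] :=
  ∏ i ∈ range m, (1 + (X : PowerSeries α) ^ (i + 1))

open Finset.HasAntidiagonal

universe u
variable {ι : Type u}

/-- A convenience constructor for the power series whose coefficients indicate a subset. -/
def indicatorSeries (α : Type*) [Semiring α] (s : Set ℕ) : PowerSeries α :=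
  PowerSeries.mk fun n => if n ∈ s then 1 else 0

theorem coeff_indicator (s : Set ℕ) [Semiring α] (n : ℕ) :
    coeff n (indicatorSeries α s) = if n ∈ s then 1 else 0 :=
  coeff_mk _ _

theorem coeff_indicator_pos (s : Set ℕ) [Semiring α] (n : ℕ) (h : n ∈ s) :
    coeff n (indicatorSeries α s) = 1 := by rw [coeff_indicator, if_pos h]

theorem coeff_indicator_neg (s : Set ℕ) [Semiring α] (n : ℕ) (h : n ∉ s) :
    coeff n (indicatorSeries α s) = 0 := by rw [coeff_indicator, if_neg h]

theorem constantCoeff_indicator (s : Set ℕ) [Semiring α] :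
    constantCoeff (indicatorSeries α s) = if 0 ∈ s then 1 else 0 :=
  rfl

theorem two_series (i : ℕ) [Semiring α] :
    1 + (X : PowerSeries α) ^ i.succ = indicatorSeries α {0, i.succ} := by
  ext n
  simp only [coeff_indicator, coeff_one, coeff_X_pow, Set.mem_insert_iff, Set.mem_singleton_iff,
    map_add]
  cases' n with d
  · simp [(Nat.succ_ne_zero i).symm]
  · simp [Nat.succ_ne_zero d]

theorem num_series' [Field α] (i : ℕ) :
    (1 - (X : PowerSeries α) ^ (i + 1))⁻¹ = indicatorSeries α {k | i + 1 ∣ k} := by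
  rw [PowerSeries.inv_eq_iff_mul_eq_one]
  · ext n
    cases n with
    | zero => simp [mul_sub, zero_pow, constantCoeff_indicator]
    | succ n =>
      simp only [coeff_one, if_false, mul_sub, mul_one, coeff_indicator,
        LinearMap.map_sub, reduceCtorEq]
      simp_rw [coeff_mul, coeff_X_pow, coeff_indicator, @boole_mul _ _ _ _]
      rw [@sum_ite _ _ _ _ _ (fun _ => Classical.propDecidable _), sum_ite]
      simp_rw [@filter_filter _ _ _ _ _, sum_const_zero, add_zero, sum_const, nsmul_eq_mul, mul_one,
        sub_eq_iff_eq_add, zero_add]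
      symm
      split_ifs with h
      · suffices #{a ∈ antidiagonal (n + 1) | i + 1 ∣ a.fst ∧ a.snd = i + 1} = 1 by
          simp only [Set.mem_setOf_eq]; convert congr_arg ((↑) : ℕ → α) this; norm_cast
        rw [card_eq_one]
        cases' h with p hp
        refine ⟨((i + 1) * (p - 1), i + 1), ?_⟩
        ext ⟨a₁, a₂⟩
        simp only [mem_filter, Prod.mk_inj, HasAntidiagonal.mem_antidiagonal, mem_singleton]
        constructor
        · rintro ⟨a_left, ⟨a, rfl⟩, rfl⟩
          refine ⟨?_, rfl⟩
          rw [Nat.mul_sub_left_distrib, ← hp, ← a_left, mul_one, Nat.add_sub_cancel]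
        · rintro ⟨rfl, rfl⟩
          match p with
          | 0 => rw [mul_zero] at hp; cases hp
          | p + 1 => rw [hp]; simp [mul_add]
      · suffices #{a ∈ antidiagonal (n + 1) | i + 1 ∣ a.fst ∧ a.snd = i + 1} = 0 by
          simp only [Set.mem_setOf_eq]; convert congr_arg ((↑) : ℕ → α) this; norm_cast
        rw [card_eq_zero]
        apply eq_empty_of_forall_notMem
        simp only [Prod.forall, mem_filter, not_and, HasAntidiagonal.mem_antidiagonal]
        rintro _ h₁ h₂ ⟨a, rfl⟩ rfl
        apply h
        simp [← h₂]
  · simp [zero_pow]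

def mkOdd : ℕ ↪ ℕ :=
  ⟨fun i => 2 * i + 1, fun x y h => by linarith⟩

-- The main workhorse of the partition theorem proof.
theorem partialGF_prop (α : Type*) [CommSemiring α] (n : ℕ) (s : Finset ℕ) (hs : ∀ i ∈ s, 0 < i)
    (c : ℕ → Set ℕ) (hc : ∀ i, i ∉ s → 0 ∈ c i) :
    #{p : n.Partition | (∀ j, p.parts.count j ∈ c j) ∧ ∀ j ∈ p.parts, j ∈ s} =
      coeff n (∏ i ∈ s, indicatorSeries α ((· * i) '' c i)) := by
  simp_rw [coeff_prod, coeff_indicator, prod_boole, sum_boole]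
  apply congr_arg
  simp only [mem_univ, forall_true_left, not_and, not_forall, exists_prop,
    Set.mem_image, not_exists]
  set φ : (a : Nat.Partition n) →
    a ∈ filter (fun p ↦ (∀ (j : ℕ), Multiset.count j p.parts ∈ c j) ∧ ∀ j ∈ p.parts, j ∈ s) univ →
    ℕ →₀ ℕ := fun p _ => {
      toFun := fun i => Multiset.count i p.parts • i
      support := Finset.filter (fun i => i ≠ 0) p.parts.toFinset
      mem_support_toFun := fun a => by
        simp only [smul_eq_mul, ne_eq, mul_eq_zero, Multiset.count_eq_zero]
        rw [not_or, not_not]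
        simp only [Multiset.mem_toFinset, not_not, mem_filter] }
  refine Finset.card_bij φ ?_ ?_ ?_
  · intro a ha
    simp only [φ, not_forall, not_exists, not_and, exists_prop, mem_filter]
    rw [mem_finsuppAntidiag]
    dsimp only [ne_eq, smul_eq_mul, id_eq, eq_mpr_eq_cast, le_eq_subset, Finsupp.coe_mk]
    simp only [mem_univ, forall_true_left, not_and, not_forall, exists_prop,
      mem_filter, true_and] at ha
    refine ⟨⟨?_, fun i ↦ ?_⟩, fun i _ ↦ ⟨a.parts.count i, ha.1 i, rfl⟩⟩
    · conv_rhs => simp [← a.parts_sum]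
      rw [sum_multiset_count_of_subset _ s]
      · simp only [smul_eq_mul]
      · intro i
        simp only [Multiset.mem_toFinset, not_not, mem_filter]
        apply ha.2
    · simp only [ne_eq, Multiset.mem_toFinset, not_not, mem_filter, and_imp]
      exact fun hi _ ↦ ha.2 i hi
  · intro p₁ hp₁ p₂ hp₂ h
    apply Nat.Partition.ext
    simp only [true_and, mem_univ, mem_filter] at hp₁ hp₂
    ext i
    simp only [φ, ne_eq, Multiset.mem_toFinset, not_not, smul_eq_mul, Finsupp.mk.injEq] at h
    by_cases hi : i = 0
    · rw [hi]
      rw [Multiset.count_eq_zero_of_notMem]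
      · rw [Multiset.count_eq_zero_of_notMem]
        intro a; exact Nat.lt_irrefl 0 (hs 0 (hp₂.2 0 a))
      intro a; exact Nat.lt_irrefl 0 (hs 0 (hp₁.2 0 a))
    · rw [← mul_left_inj' hi]
      rw [funext_iff] at h
      exact h.2 i
  · simp only [φ, mem_filter, mem_finsuppAntidiag, mem_univ, exists_prop, true_and, and_assoc]
    rintro f ⟨hf, hf₃, hf₄⟩
    have hf' : f ∈ finsuppAntidiag s n := mem_finsuppAntidiag.mpr ⟨hf, hf₃⟩
    simp only [mem_finsuppAntidiag] at hf'
    refine ⟨⟨∑ i ∈ s, Multiset.replicate (f i / i) i, ?_, ?_⟩, ?_, ?_, ?_⟩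
    · intro i hi
      simp only [exists_prop, Multiset.mem_sum, mem_map, Function.Embedding.coeFn_mk] at hi
      rcases hi with ⟨t, ht, z⟩
      apply hs
      rwa [Multiset.eq_of_mem_replicate z]
    · simp_rw [Multiset.sum_sum, Multiset.sum_replicate, Nat.nsmul_eq_mul]
      rw [← hf'.1]
      refine sum_congr rfl fun i hi => Nat.div_mul_cancel ?_
      rcases hf₄ i hi with ⟨w, _, hw₂⟩
      rw [← hw₂]
      exact dvd_mul_left _ _
    · intro i
      simp_rw [Multiset.count_sum', Multiset.count_replicate, sum_ite_eq']
      split_ifs with h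
      · rcases hf₄ i h with ⟨w, hw₁, hw₂⟩
        rwa [← hw₂, Nat.mul_div_cancel _ (hs i h)]
      · exact hc _ h
    · intro i hi
      rw [Multiset.mem_sum] at hi
      rcases hi with ⟨j, hj₁, hj₂⟩
      rwa [Multiset.eq_of_mem_replicate hj₂]
    · ext i
      simp_rw [Multiset.count_sum', Multiset.count_replicate, sum_ite_eq']
      simp only [ne_eq, Multiset.mem_toFinset, not_not, smul_eq_mul, ite_mul,
        zero_mul, Finsupp.coe_mk]
      split_ifs with h
      · apply Nat.div_mul_cancel
        rcases hf₄ i h with ⟨w, _, hw₂⟩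
        apply Dvd.intro_left _ hw₂
      · apply symm
        rw [← Finsupp.notMem_support_iff]
        exact notMem_mono hf'.2 h

end
end Theorems100
end ArchivePart

open Polynomial Finset
namespace RamaSeven



/-- Gaussian binomial coefficient as a polynomial in `q` over `ℤ`. -/
noncomputable def qb : ℕ → ℕ → Polynomial ℤ
  | 0, 0 => 1
  | 0, _ + 1 => 0
  | _ + 1, 0 => 1
  | m + 1, i + 1 => qb m i + X ^ (i + 1) * qb m (i + 1)
  termination_by m _ => m

@[simp] lemma qb_zero_right (m : ℕ) : qb m 0 = 1 := by cases m <;> rw [qb]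

@[simp] lemma qb_zero_succ (i : ℕ) : qb 0 (i + 1) = 0 := by rw [qb]

lemma qb_pascal1 (m i : ℕ) : qb (m + 1) (i + 1) = qb m i + X ^ (i + 1) * qb m (i + 1) := by
  rw [qb]

lemma qb_eq_zero_of_lt : ∀ {m i : ℕ}, m < i → qb m i = 0
  | 0, _ + 1, _ => by rw [qb]
  | m + 1, i + 1, h => by
    rw [qb_pascal1, qb_eq_zero_of_lt (by omega), qb_eq_zero_of_lt (by omega)]
    ring

@[simp] lemma qb_self (m : ℕ) : qb m m = 1 := by
  induction m with
  | zero => rw [qb]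
  | succ m ih => rw [qb_pascal1, ih, qb_eq_zero_of_lt (by omega)]; ring

lemma qb_one (m : ℕ) : qb m 1 = ∑ k ∈ range m, X ^ k := by
  induction m with
  | zero => simp
  | succ m ih =>
    rw [qb_pascal1, ih, qb_zero_right, Finset.sum_range_succ', mul_sum]
    simp [pow_succ, mul_comm, add_comm]

lemma qb_pascal2 : ∀ m i : ℕ, qb (m + 1) (i + 1) = X ^ (m - i) * qb m i + qb m (i + 1) := by
  intro m
  induction m with
  | zero =>
    intro i
    match i with
    | 0 => simp [qb_pascal1]
    | i + 1 => rw [qb_pascal1]; simp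
  | succ m ih =>
    intro i
    match i with
    | 0 =>
      rw [qb_one, qb_one, qb_zero_right, Finset.sum_range_succ]
      have : m + 1 - 0 = m + 1 := by omega
      rw [this]; ring
    | i + 1 =>
      rcases Nat.lt_or_ge i m with h | h
      · calc qb (m + 1 + 1) (i + 1 + 1)
            = qb (m + 1) (i + 1) + X ^ (i + 1 + 1) * qb (m + 1) (i + 1 + 1) :=
              qb_pascal1 _ _
          _ = (X ^ (m - i) * qb m i + qb m (i + 1)) +
              X ^ (i + 1 + 1) * (X ^ (m - (i + 1)) * qb m (i + 1) + qb m (i + 1 + 1)) := by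
              rw [ih i, ih (i + 1)]
          _ = X ^ (m + 1 - (i + 1)) * (qb m i + X ^ (i + 1) * qb m (i + 1)) +
              (qb m (i + 1) + X ^ (i + 1 + 1) * qb m (i + 1 + 1)) := by
              have e1 : m + 1 - (i + 1) = m - i := by omega
              have e2 : (i + 1 + 1) + (m - (i + 1)) = (m - i) + (i + 1) := by omega
              rw [e1, mul_add, ← mul_assoc, ← pow_add, e2, pow_add, mul_assoc]
              ring
          _ = X ^ (m + 1 - (i + 1)) * qb (m + 1) (i + 1) + qb (m + 1) (i + 1 + 1) := by
              rw [← qb_pascal1, ← qb_pascal1]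
      · rcases Nat.eq_or_lt_of_le h with h' | h'
        · subst h'
          rw [qb_self, qb_self, qb_eq_zero_of_lt (show m + 1 < m + 1 + 1 by omega)]
          simp
        · rw [qb_eq_zero_of_lt (by omega), qb_eq_zero_of_lt (by omega),
            qb_eq_zero_of_lt (by omega)]
          simp

lemma qb_symm : ∀ m i : ℕ, i ≤ m → qb m (m - i) = qb m i := by
  intro m
  induction m with
  | zero => intro i h; interval_cases i; rfl
  | succ m ih =>
    intro i hi
    match i with
    | 0 => simp
    | i + 1 =>
      rcases Nat.eq_or_lt_of_le hi with h' | h'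
      · have : i = m := by omega
        subst this
        simp
      · have him : i + 1 ≤ m := by omega
        have hms : m + 1 - (i + 1) = (m - (i + 1)) + 1 := by omega
        calc qb (m + 1) (m + 1 - (i + 1))
            = qb (m + 1) ((m - (i + 1)) + 1) := by rw [hms]
          _ = X ^ (m - (m - (i + 1))) * qb m (m - (i + 1)) + qb m (m - (i + 1) + 1) :=
              qb_pascal2 _ _
          _ = X ^ (i + 1) * qb m (i + 1) + qb m i := by
              have h2 : m - (m - (i + 1)) = i + 1 := by omega
              have h3 : m - (i + 1) + 1 = m - i := by omega
              rw [h2, h3, ih _ him, ih _ (by omega)]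
          _ = qb (m + 1) (i + 1) := by rw [qb_pascal1]; ring

lemma qb_diff_dvd (n k : ℕ) (hk : n ≤ k) :
    X ^ (2 * n - k) ∣ qb (2 * n) (k + 1) - qb (2 * n) k := by
  rcases Nat.eq_zero_or_pos n with rfl | hn
  · simpa using dvd_refl (1 : Polynomial ℤ)
  · have hk1 : 1 ≤ k := le_trans hn hk
    obtain ⟨k, rfl⟩ : ∃ k', k = k' + 1 := ⟨k - 1, by omega⟩
    obtain ⟨m, hm⟩ : ∃ m, 2 * n = m + 1 := ⟨2 * n - 1, by omega⟩
    have hd : 2 * n - (k + 1) = m - k := by omega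
    rw [hd, hm, qb_pascal1 m (k + 1), qb_pascal2 m k]
    have e : (qb m (k + 1) + X ^ (k + 1 + 1) * qb m (k + 1 + 1)) -
        (X ^ (m - k) * qb m k + qb m (k + 1)) =
        X ^ (k + 1 + 1) * qb m (k + 1 + 1) - X ^ (m - k) * qb m k := by ring
    rw [e]
    exact dvd_sub ((pow_dvd_pow X (by omega)).mul_right _) (dvd_mul_right _ _)




/-- triangular numbers -/
def tri : ℕ → ℕ
  | 0 => 0
  | j + 1 => tri j + j + 1

lemma tri_succ (j : ℕ) : tri (j + 1) = tri j + j + 1 := rfl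

lemma le_tri : ∀ j : ℕ, j ≤ tri j
  | 0 => le_refl 0
  | j + 1 => by rw [tri_succ]; have := le_tri j; omega

/-- `toff i b` is the triangular number `T (i - b)` of the (possibly negative) integer `i - b`. -/
def toff : ℕ → ℕ → ℕ
  | i, 0 => tri i
  | 0, b + 1 => toff 0 b + b
  | i + 1, b + 1 => toff i b

lemma toff_zero_right (i : ℕ) : toff i 0 = tri i := by rw [toff]
lemma toff_zero_succ (b : ℕ) : toff 0 (b + 1) = toff 0 b + b := by rw [toff]
lemma toff_succ_succ (i b : ℕ) : toff (i + 1) (b + 1) = toff i b := by rw [toff]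

lemma toff_zero_left : ∀ b : ℕ, toff 0 b = tri (b - 1)
  | 0 => rfl
  | b + 1 => by
    rw [toff_zero_succ, toff_zero_left b]
    rcases Nat.eq_zero_or_pos b with rfl | hb
    · rfl
    · obtain ⟨c, rfl⟩ : ∃ c, b = c + 1 := ⟨b - 1, by omega⟩
      simp only [Nat.add_sub_cancel, tri_succ]
      omega

lemma toff_shift : ∀ b j : ℕ, toff (b + j) b = tri j
  | 0, j => by rw [Nat.zero_add, toff_zero_right]
  | b + 1, j => by
    have : b + 1 + j = (b + j) + 1 := by omega
    rw [this, toff_succ_succ, toff_shift b j]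

lemma toff_reflect : ∀ b j : ℕ, j < b → toff (b - 1 - j) b = tri j := by
  intro b
  induction b with
  | zero => omega
  | succ b ih =>
    intro j hj
    rcases Nat.lt_or_ge j b with h | h
    · have : b + 1 - 1 - j = (b - 1 - j) + 1 := by omega
      rw [this, toff_succ_succ, ih j h]
    · have hjb : j = b := by omega
      subst hjb
      have : j + 1 - 1 - j = 0 := by omega
      rw [this, toff_zero_left]
      simp

lemma toff_step : ∀ b i : ℕ, toff (i + 1) b + b = toff i b + (i + 1) := by
  intro b
  induction b with
  | zero => intro i; rw [toff_zero_right, toff_zero_right, tri_succ]; omega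
  | succ b ih =>
    intro i
    match i with
    | 0 => rw [toff_succ_succ, toff_zero_succ]; omega
    | i + 1 =>
      rw [toff_succ_succ, toff_succ_succ]
      have := ih i
      omega



section Star

/-- `i`-th term of the expanded finite Jacobi triple product, living in `(ℤ[q])[z]`. -/
noncomputable def jterm (a b i : ℕ) : Polynomial (Polynomial ℤ) :=
  C ((-1) ^ (i + b) * (X ^ toff i b * qb (a + b) i)) * X ^ i

noncomputable def jsum (a b : ℕ) : Polynomial (Polynomial ℤ) :=
  ∑ i ∈ range (a + b + 1), jterm a b i

lemma jterm_top (a b : ℕ) : jterm a b (a + b + 1) = 0 := by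
  simp [jterm, qb_eq_zero_of_lt (show a + b < a + b + 1 by omega)]

lemma jterm_step_a (a b i : ℕ) (hi : i ≤ a + b) :
    jterm (a + 1) b (i + 1) = jterm a b (i + 1) - C (X ^ (a + 1)) * X * jterm a b i := by
  have hab : a + 1 + b = (a + b) + 1 := by omega
  have hexp : toff (i + 1) b + (a + b - i) = (a + 1) + toff i b := by
    have := toff_step b i; omega
  simp only [jterm, hab, qb_pascal2 (a + b) i, map_mul, map_add, map_pow, map_neg, map_one]
  have hx : ((C X : Polynomial (Polynomial ℤ))) ^ toff (i + 1) b * (C X) ^ (a + b - i) =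
      (C X) ^ (a + 1) * (C X) ^ toff i b := by
    rw [← pow_add, ← pow_add, hexp]
  linear_combination ((-1 : Polynomial (Polynomial ℤ)) ^ (i + 1 + b) *
    C (qb (a + b) i) * X ^ (i + 1)) * hx

lemma jterm_step_b (a b i : ℕ) (hi : i ≤ a + b) :
    jterm a (b + 1) (i + 1) = X * jterm a b i - C (X ^ b) * jterm a b (i + 1) := by
  have hab : a + (b + 1) = (a + b) + 1 := by omega
  have hexp : toff i b + (i + 1) = b + toff (i + 1) b := by
    have := toff_step b i; omega
  simp only [jterm, hab, toff_succ_succ, qb_pascal1 (a + b) i, map_mul, map_add, map_pow,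
    map_neg, map_one]
  have hx : ((C X : Polynomial (Polynomial ℤ))) ^ toff i b * (C X) ^ (i + 1) =
      (C X) ^ b * (C X) ^ toff (i + 1) b := by
    rw [← pow_add, ← pow_add, hexp]
  linear_combination ((-1 : Polynomial (Polynomial ℤ)) ^ (i + b) *
    C (qb (a + b) (i + 1)) * X ^ (i + 1)) * hx

lemma jterm_zero_a (a b : ℕ) : jterm (a + 1) b 0 = jterm a b 0 := by
  simp [jterm, show a + 1 + b = (a + b) + 1 from by omega]

lemma jterm_zero_b (a b : ℕ) : jterm a (b + 1) 0 = - (C (X ^ b) * jterm a b 0) := by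
  simp only [jterm, show a + (b + 1) = (a + b) + 1 from by omega, toff_zero_succ,
    qb_zero_right, map_mul, map_pow, map_neg, map_one, pow_zero, mul_one, pow_succ, pow_add]
  ring

lemma jsum_eat (a b : ℕ) :
    (∑ i ∈ range (a + b + 1), jterm a b (i + 1)) + jterm a b 0 = jsum a b := by
  rw [← Finset.sum_range_succ']
  rw [jsum, Finset.sum_range_succ, jterm_top, add_zero]

lemma jsum_step_a (a b : ℕ) : jsum (a + 1) b = jsum a b * (1 - C (X ^ (a + 1)) * X) := by
  have h1 : a + 1 + b + 1 = (a + b + 1) + 1 := by omega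
  rw [jsum, h1, Finset.sum_range_succ']
  rw [Finset.sum_congr rfl fun i hi =>
    jterm_step_a a b i (by have := mem_range.mp hi; omega)]
  rw [Finset.sum_sub_distrib, jterm_zero_a]
  have e1 := jsum_eat a b
  have e2 : ∑ i ∈ range (a + b + 1), C (X ^ (a + 1)) * X * jterm a b i =
      C (X ^ (a + 1)) * X * ∑ i ∈ range (a + b + 1), jterm a b i := by
    rw [Finset.mul_sum]
  have e3 : jsum a b = ∑ i ∈ range (a + b + 1), jterm a b i := by rw [jsum]
  linear_combination e1 - e2 + C (X ^ (a + 1)) * X * e3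

lemma jsum_step_b (a b : ℕ) : jsum a (b + 1) = jsum a b * (X - C (X ^ b)) := by
  have h1 : a + (b + 1) + 1 = (a + b + 1) + 1 := by omega
  rw [jsum, h1, Finset.sum_range_succ']
  rw [Finset.sum_congr rfl fun i hi =>
    jterm_step_b a b i (by have := mem_range.mp hi; omega)]
  rw [Finset.sum_sub_distrib, jterm_zero_b]
  have e1 := jsum_eat a b
  have e2 : ∑ i ∈ range (a + b + 1), C (X ^ b) * jterm a b (i + 1) =
      C (X ^ b) * ∑ i ∈ range (a + b + 1), jterm a b (i + 1) := by
    rw [Finset.mul_sum]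
  have e3 : jsum a b = ∑ i ∈ range (a + b + 1), jterm a b i := by rw [jsum]
  have e4 : ∑ i ∈ range (a + b + 1), X * jterm a b i =
      X * ∑ i ∈ range (a + b + 1), jterm a b i := by
    rw [Finset.mul_sum]
  linear_combination e4 - e2 - C (X ^ b) * e1 - X * e3

theorem star (a b : ℕ) :
    (∏ k ∈ range a, (1 - C (X ^ (k + 1)) * X)) * (∏ k ∈ range b, (X - C (X ^ k))) =
      jsum a b := by
  induction a with
  | zero =>
    simp only [Finset.range_zero, Finset.prod_empty, one_mul]
    induction b with
    | zero => simp [jsum, jterm, toff_zero_right, tri]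
    | succ b ihb => rw [Finset.prod_range_succ, ihb, jsum_step_b]
  | succ a iha =>
    rw [Finset.prod_range_succ, jsum_step_a, ← iha]
    ring

end Star
section Jac

/-- Euler product `(q;q)_n` over `ℤ`. -/
noncomputable def E (n : ℕ) : Polynomial ℤ := ∏ k ∈ range n, (1 - X ^ (k + 1))

/-- Truncated Jacobi cube series `∑ (-1)^j (2j+1) q^{T_j}`. -/
noncomputable def Jp (n : ℕ) : Polynomial ℤ :=
  ∑ j ∈ range n, C ((-1) ^ j * (2 * (j : ℤ) + 1)) * X ^ tri j

lemma qb_congr_center (n : ℕ) : ∀ j, j ≤ n →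
    X ^ (n - j) ∣ qb (2 * n) (n + j) - qb (2 * n) n := by
  intro j
  induction j with
  | zero => simp
  | succ j ih =>
    intro hj
    have h1 : qb (2 * n) (n + (j + 1)) - qb (2 * n) n =
        (qb (2 * n) ((n + j) + 1) - qb (2 * n) (n + j)) +
        (qb (2 * n) (n + j) - qb (2 * n) n) := by
      have : n + (j + 1) = (n + j) + 1 := by omega
      rw [this]; ring
    rw [h1]
    refine dvd_add (dvd_trans (pow_dvd_pow X (show n - (j+1) ≤ 2*n - (n+j) by omega)) ?_)
      (dvd_trans (pow_dvd_pow X (show n - (j+1) ≤ n - j by omega)) (ih (by omega)))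
    exact qb_diff_dvd n (n + j) (by omega)

lemma E_coeff_zero (n : ℕ) : (E n).coeff 0 = 1 := by
  rw [E, coeff_zero_eq_eval_zero, eval_prod]
  simp

lemma E_ne_zero (n : ℕ) : E n ≠ 0 := fun h => by
  have h2 := E_coeff_zero n
  rw [h] at h2
  simp at h2

/-- `(q;q)_a (q;q)_b \binom{a+b}{a}_q = (q;q)_{a+b}` -/
lemma E_mul_E_qb : ∀ a b : ℕ, E a * E b * qb (a + b) a = E (a + b) := by
  intro a
  induction a with
  | zero => intro b; simp [E]
  | succ a iha =>
    intro b
    induction b with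
    | zero =>
      have h0 : E 0 = 1 := by rw [E, prod_range_zero]
      simp [h0]
    | succ b ihb =>
      have h1 : a + 1 + (b + 1) = (a + (b + 1)) + 1 := by omega
      have h2 : a + (b + 1) = (a + 1) + b := by omega
      have hE1 : E (a + 1) = E a * (1 - X ^ (a + 1)) := by rw [E, E, prod_range_succ]
      have hE2 : E (b + 1) = E b * (1 - X ^ (b + 1)) := by rw [E, E, prod_range_succ]
      have hEtop : E (a + (b + 1) + 1) = E (a + (b + 1)) * (1 - X ^ (a + (b+1) + 1)) := by
        rw [E, E, prod_range_succ]
      rw [h1, qb_pascal1 (a + (b + 1)) a, hEtop]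
      have key1 : E (a + 1) * E (b + 1) * qb (a + (b + 1)) a =
          (1 - X ^ (a + 1)) * E (a + (b + 1)) := by
        rw [hE1, ← iha (b + 1)]; ring
      have key2 : E (a + 1) * E (b + 1) * qb (a + (b + 1)) (a + 1) =
          (1 - X ^ (b + 1)) * E (a + (b + 1)) := by
        rw [hE2, h2, ← ihb]; ring
      calc E (a + 1) * E (b + 1) * (qb (a + (b + 1)) a + X ^ (a + 1) * qb (a + (b + 1)) (a + 1))
          = E (a + 1) * E (b + 1) * qb (a + (b + 1)) a +
            X ^ (a + 1) * (E (a + 1) * E (b + 1) * qb (a + (b + 1)) (a + 1)) := by ring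
        _ = (1 - X ^ (a + 1)) * E (a + (b + 1)) +
            X ^ (a + 1) * ((1 - X ^ (b + 1)) * E (a + (b + 1))) := by rw [key1, key2]
        _ = E (a + (b + 1)) * (1 - X ^ (a + (b + 1) + 1)) := by
            rw [show a + (b + 1) + 1 = (a + 1) + (b + 1) from by omega, pow_add]; ring

lemma tail_dvd (n : ℕ) : ∀ s : ℕ,
    X ^ (n + 1) ∣ (∏ k ∈ range s, (1 - X ^ (n + k + 1)) : Polynomial ℤ) - 1 := by
  intro s
  induction s with
  | zero => simp
  | succ s ih =>
    rw [prod_range_succ]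
    have h : (∏ k ∈ range s, (1 - X ^ (n + k + 1)) : Polynomial ℤ) * (1 - X ^ (n + s + 1)) - 1 =
        ((∏ k ∈ range s, (1 - X ^ (n + k + 1))) - 1) * (1 - X ^ (n + s + 1)) +
        (- X ^ (n + s + 1)) := by ring
    rw [h]
    exact dvd_add (ih.mul_right _) (dvd_neg.mpr (pow_dvd_pow X (by omega)))

/-- cancellation: if `f` has constant coefficient `1` then `X^D ∣ f * g → X^D ∣ g`. -/
lemma cancel_of_coeff_zero_one {f g : Polynomial ℤ} (hf : f.coeff 0 = 1) {D : ℕ}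
    (h : X ^ D ∣ f * g) : X ^ D ∣ g := by
  rw [X_pow_dvd_iff] at h ⊢
  intro d
  induction d using Nat.strong_induction_on with
  | _ d ih =>
    intro hd
    have hc := h d hd
    rw [coeff_mul, Finset.sum_eq_single ((0 : ℕ), d)] at hc
    · rw [hf, one_mul] at hc; exact hc
    · rintro ⟨x, y⟩ hxy hne
      rw [Finset.HasAntidiagonal.mem_antidiagonal] at hxy
      rcases Nat.eq_zero_or_pos x with rfl | hx
      · have : y = d := by omega
        subst this
        exact (hne rfl).elim
      · have hy : y < d := by omega
        rw [ih y hy (by omega), mul_zero]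
    · intro hmem
      exact (hmem (Finset.HasAntidiagonal.mem_antidiagonal.mpr (by omega))).elim

lemma deriv_lhs (m : ℕ) :
    eval (1 : Polynomial ℤ) (derivative ((∏ k ∈ range (m + 1),
        (1 - C ((X : Polynomial ℤ) ^ (k + 1)) * X)) * (∏ k ∈ range (m + 1), (X - C (X ^ k))))) =
      E (m + 1) * E m := by
  have hsplit : (∏ k ∈ range (m + 1), ((X : Polynomial (Polynomial ℤ)) - C (X ^ k))) =
      (∏ k ∈ range m, (X - C (X ^ (k + 1)))) * (X - 1) := by
    rw [prod_range_succ']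
    simp
  rw [hsplit]
  set R := (∏ k ∈ range (m + 1), (1 - C ((X : Polynomial ℤ) ^ (k + 1)) * X)) *
      (∏ k ∈ range m, ((X : Polynomial (Polynomial ℤ)) - C (X ^ (k + 1)))) with hR
  have hassoc : (∏ k ∈ range (m + 1), (1 - C ((X : Polynomial ℤ) ^ (k + 1)) * X)) *
      ((∏ k ∈ range m, ((X : Polynomial (Polynomial ℤ)) - C (X ^ (k + 1)))) * (X - 1)) =
      R * (X - 1) := by rw [hR]; ring
  rw [hassoc, derivative_mul, eval_add, eval_mul, eval_mul]
  have h1 : ((X : Polynomial (Polynomial ℤ)) - 1).eval 1 = 0 := by simp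
  have h2 : (derivative ((X : Polynomial (Polynomial ℤ)) - 1)).eval 1 = 1 := by simp
  rw [h1, h2, mul_zero, zero_add, mul_one, hR, eval_mul, eval_prod, eval_prod]
  have e1 : ∀ k, ((1 : Polynomial (Polynomial ℤ)) - C ((X : Polynomial ℤ) ^ (k + 1)) * X).eval 1 =
      1 - X ^ (k + 1) := by intro k; simp
  have e2 : ∀ k, ((X : Polynomial (Polynomial ℤ)) - C ((X : Polynomial ℤ) ^ (k + 1))).eval 1 =
      1 - X ^ (k + 1) := by intro k; simp
  rw [Finset.prod_congr rfl fun k _ => e1 k, Finset.prod_congr rfl fun k _ => e2 k, E, E]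

lemma deriv_jsum (n : ℕ) :
    eval (1 : Polynomial ℤ) (derivative (jsum n n)) =
      ∑ i ∈ range (n + n + 1),
        (-1) ^ (i + n) * (i : Polynomial ℤ) * (X ^ toff i n * qb (n + n) i) := by
  rw [jsum, map_sum derivative, eval_finset_sum]
  refine Finset.sum_congr rfl fun i _ => ?_
  rw [jterm, derivative_C_mul_X_pow, eval_mul, eval_C, eval_pow, eval_X, one_pow, mul_one]
  push_cast
  ring

end Jac
section Jac2

noncomputable def fterm (n i : ℕ) : Polynomial ℤ :=
  (-1) ^ (i + n) * (i : Polynomial ℤ) * (X ^ toff i n * qb (n + n) i)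

lemma deriv_jsum' (n : ℕ) :
    eval (1 : Polynomial ℤ) (derivative (jsum n n)) = ∑ i ∈ range (n + n + 1), fterm n i := by
  rw [deriv_jsum]
  simp only [fterm]

lemma pair_dvd (n j : ℕ) (hj : j < n) :
    X ^ (n - 1) ∣ fterm n (n + j) + fterm n (n - 1 - j) -
      qb (n + n) n * (C ((-1) ^ j * (2 * (j : ℤ) + 1)) * X ^ tri j) := by
  have h2n : n + n = 2 * n := by omega
  have htoff1 : toff (n + j) n = tri j := toff_shift n j
  have htoff2 : toff (n - 1 - j) n = tri j := toff_reflect n j hj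
  have hsym : qb (n + n) (n - 1 - j) = qb (n + n) (n + 1 + j) := by
    rw [h2n, ← qb_symm (2 * n) (n + 1 + j) (by omega)]
    congr 1
    omega
  have hsign1 : ((-1 : Polynomial ℤ)) ^ ((n + j) + n) = (-1) ^ j := by
    rw [show (n + j) + n = j + 2 * n by omega, pow_add, pow_mul]
    simp
  have hsign2 : ((-1 : Polynomial ℤ)) ^ ((n - 1 - j) + n) = -(-1) ^ j := by
    rw [show (n - 1 - j) + n = (j + 1) + 2 * (n - 1 - j) by omega, pow_add, pow_mul]
    simp [pow_succ]
  have hcast1 : ((n + j : ℕ) : Polynomial ℤ) = (n : Polynomial ℤ) + (j : ℕ) := by push_cast; ring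
  have hcast2 : ((n - 1 - j : ℕ) : Polynomial ℤ) =
      (n : Polynomial ℤ) - 1 - (j : ℕ) := by
    rw [show n - 1 - j = n - (1 + j) by omega, Nat.cast_sub (by omega)]
    push_cast
    ring
  have hC : C ((-1) ^ j * (2 * (j : ℤ) + 1)) =
      (-1 : Polynomial ℤ) ^ j * (2 * ((j : ℕ) : Polynomial ℤ) + 1) := by
    push_cast
    rw [map_mul, map_pow, map_add, map_mul]
    simp
  have hdA : X ^ (n - 1 - j) ∣ qb (n + n) (n + j) - qb (n + n) n := by
    rw [h2n]
    exact dvd_trans (pow_dvd_pow X (show n - 1 - j ≤ n - j by omega))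
      (qb_congr_center n j (by omega))
  have hdA' : X ^ (n - 1 - j) ∣ qb (n + n) (n + 1 + j) - qb (n + n) n := by
    rw [h2n]
    have := qb_congr_center n (j + 1) (by omega)
    rw [show n + (j + 1) = n + 1 + j by omega, show n - (j + 1) = n - 1 - j by omega] at this
    exact this
  obtain ⟨u, hu⟩ := hdA
  obtain ⟨v, hv⟩ := hdA'
  refine dvd_trans (pow_dvd_pow X (show n - 1 ≤ tri j + (n - 1 - j) from by
    have := le_tri j; omega)) ?_
  refine ⟨(-1) ^ j * (((n : Polynomial ℤ) + (j : ℕ)) * u -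
    ((n : Polynomial ℤ) - 1 - (j : ℕ)) * v), ?_⟩
  rw [fterm, fterm, htoff1, htoff2, hsym, hsign1, hsign2, hcast1, hcast2, hC, pow_add]
  linear_combination ((-1 : Polynomial ℤ)) ^ j * X ^ tri j *
      (((n : Polynomial ℤ) + (j : ℕ)) * hu - ((n : Polynomial ℤ) - 1 - (j : ℕ)) * hv)

lemma ftop_dvd (m : ℕ) : X ^ m ∣ fterm (m + 1) ((m + 1) + (m + 1)) := by
  rw [fterm, toff_shift (m + 1) (m + 1), qb_self, mul_one]
  exact ((pow_dvd_pow X (show m ≤ tri (m + 1) from by have := le_tri (m + 1); omega)).mul_left _)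

theorem jacobi_aux (n : ℕ) : X ^ (n - 1) ∣ E n * E (n - 1) - qb (2 * n) n * Jp n := by
  rcases Nat.eq_zero_or_pos n with rfl | hn
  · simp
  obtain ⟨m, rfl⟩ : ∃ m, n = m + 1 := ⟨n - 1, by omega⟩
  simp only [Nat.add_sub_cancel]
  have h3 : eval (1 : Polynomial ℤ) (derivative ((∏ k ∈ range (m + 1),
      (1 - C ((X : Polynomial ℤ) ^ (k + 1)) * X)) * (∏ k ∈ range (m + 1), (X - C (X ^ k))))) =
      eval (1 : Polynomial ℤ) (derivative (jsum (m + 1) (m + 1))) := by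
    rw [star]
  have hEE : E (m + 1) * E m = ∑ i ∈ range ((m + 1) + (m + 1) + 1), fterm (m + 1) i := by
    rw [← deriv_jsum', ← h3, deriv_lhs]
  have hsplit : ∑ i ∈ range ((m + 1) + (m + 1) + 1), fterm (m + 1) i =
      (∑ j ∈ range (m + 1), fterm (m + 1) ((m + 1) - 1 - j)) +
      ((∑ j ∈ range (m + 1), fterm (m + 1) ((m + 1) + j)) +
        fterm (m + 1) ((m + 1) + (m + 1))) := by
    rw [show (m + 1) + (m + 1) + 1 = (m + 1) + ((m + 1) + 1) from by omega,
      Finset.sum_range_add]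
    rw [Finset.sum_range_succ (fun x => fterm (m + 1) ((m + 1) + x)) (m + 1)]
    rw [← Finset.sum_range_reflect (fun j => fterm (m + 1) j) (m + 1)]
  have hJp : qb (2 * (m + 1)) (m + 1) * Jp (m + 1) =
      ∑ j ∈ range (m + 1),
        qb ((m + 1) + (m + 1)) (m + 1) * (C ((-1) ^ j * (2 * (j : ℤ) + 1)) * X ^ tri j) := by
    rw [Jp, Finset.mul_sum, show 2 * (m + 1) = (m + 1) + (m + 1) from by omega]
  have hmain : E (m + 1) * E m - qb (2 * (m + 1)) (m + 1) * Jp (m + 1) =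
      (∑ j ∈ range (m + 1), (fterm (m + 1) ((m + 1) + j) + fterm (m + 1) ((m + 1) - 1 - j) -
        qb ((m + 1) + (m + 1)) (m + 1) * (C ((-1) ^ j * (2 * (j : ℤ) + 1)) * X ^ tri j))) +
      fterm (m + 1) ((m + 1) + (m + 1)) := by
    rw [hEE, hsplit, hJp, Finset.sum_sub_distrib, Finset.sum_add_distrib]
    ring
  rw [hmain]
  exact dvd_add (Finset.dvd_sum fun j hj =>
    pair_dvd (m + 1) j (by have := mem_range.mp hj; omega)) (ftop_dvd m)

theorem jacobi_cube (n : ℕ) : X ^ (n - 1) ∣ E n ^ 3 - Jp n := by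
  rcases Nat.eq_zero_or_pos n with rfl | hn
  · simp
  have h1 := jacobi_aux n
  have h2 : E n * E n * qb (2 * n) n = E (2 * n) := by
    have := E_mul_E_qb n n
    rwa [show n + n = 2 * n from by omega] at this
  have h3 : E (2 * n) = E (n - 1) * (∏ k ∈ range (n + 1), (1 - X ^ ((n - 1) + k + 1))) := by
    rw [E, E, show 2 * n = (n - 1) + (n + 1) from by omega, prod_range_add]
  have h4 : X ^ n ∣ (∏ k ∈ range (n + 1), ((1 : Polynomial ℤ) - X ^ ((n - 1) + k + 1))) - 1 := by
    have h := tail_dvd (n - 1) (n + 1)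
    rwa [show (n - 1) + 1 = n from by omega] at h
  have key : X ^ (n - 1) ∣ E (n - 1) * (E n ^ 3 - Jp n) := by
    have hexp : E (n - 1) * (E n ^ 3 - Jp n) =
        E n ^ 2 * (E n * E (n - 1) - qb (2 * n) n * Jp n) +
        Jp n * (E n * E n * qb (2 * n) n - E (n - 1)) := by ring
    rw [hexp]
    refine dvd_add (h1.mul_left _) (Dvd.dvd.mul_left ?_ _)
    rw [h2, h3]
    have : E (n - 1) * (∏ k ∈ range (n + 1), (1 - X ^ ((n - 1) + k + 1))) - E (n - 1) =
        E (n - 1) * ((∏ k ∈ range (n + 1), (1 - X ^ ((n - 1) + k + 1))) - 1) := by ring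
    rw [this]
    exact dvd_trans (pow_dvd_pow X (by omega)) (h4.mul_left _)
  exact cancel_of_coeff_zero_one (E_coeff_zero (n - 1)) key

lemma jacobi_coeff (n d : ℕ) (hd : d + 1 < n) : (E n ^ 3).coeff d = (Jp n).coeff d := by
  have h := jacobi_cube n
  rw [X_pow_dvd_iff] at h
  have h2 := h d (by omega)
  rwa [coeff_sub, sub_eq_zero] at h2

end Jac2
section NumberTheory

lemma two_tri : ∀ j : ℕ, 2 * tri j = j * (j + 1)
  | 0 => rfl
  | j + 1 => by
    rw [tri_succ]
    have := two_tri j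
    calc 2 * (tri j + j + 1) = j * (j + 1) + 2 * j + 2 := by omega
      _ = (j + 1) * (j + 1 + 1) := by ring

lemma eight_tri (j : ℕ) : (2 * j + 1) ^ 2 = 8 * tri j + 1 := by
  have h := two_tri j
  calc (2 * j + 1) ^ 2 = 4 * (j * (j + 1)) + 1 := by ring
    _ = 4 * (2 * tri j) + 1 := by rw [h]
    _ = 8 * tri j + 1 := by ring

lemma key7 (j k d : ℕ) (h : tri j + tri k = d) (hd : d % 7 = 5) :
    (2 * (j : ZMod 7) + 1) * (2 * (k : ZMod 7) + 1) = 0 := by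
  have hq : ∀ x y : ZMod 7, x ^ 2 + y ^ 2 = 0 → x * y = 0 := by decide
  apply hq
  have hnat : (2 * j + 1) ^ 2 + (2 * k + 1) ^ 2 = 8 * d + 2 := by
    rw [eight_tri, eight_tri]; omega
  have hcast : (((2 * j + 1) ^ 2 + (2 * k + 1) ^ 2 : ℕ) : ZMod 7) = 0 := by
    rw [hnat, ZMod.natCast_eq_zero_iff]
    omega
  push_cast at hcast
  linear_combination hcast

end NumberTheory

section Assembly

instance fact7 : Fact (Nat.Prime 7) := ⟨by norm_num⟩

noncomputable def π : Polynomial ℤ →+* PowerSeries (ZMod 7) :=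
  (Polynomial.coeToPowerSeries.ringHom).comp (Polynomial.mapRingHom (Int.castRingHom (ZMod 7)))

lemma pi_coeff (p : Polynomial ℤ) (d : ℕ) :
    PowerSeries.coeff d (π p) = ((p.coeff d : ℤ) : ZMod 7) := by
  simp [π, Polynomial.coeToPowerSeries.ringHom_apply, Polynomial.coeff_coe, Polynomial.coeff_map]

lemma pi_X : π X = PowerSeries.X := by
  simp [π, Polynomial.coeToPowerSeries.ringHom_apply]

lemma pi_C (a : ℤ) : π (C a) = PowerSeries.C ((a : ZMod 7)) := by
  simp [π, Polynomial.coeToPowerSeries.ringHom_apply]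

noncomputable def PP (m : ℕ) : PowerSeries (ZMod 7) :=
  ∏ i ∈ range m, (1 - (PowerSeries.X : PowerSeries (ZMod 7)) ^ (i + 1))

noncomputable def FF (m : ℕ) : PowerSeries (ZMod 7) :=
  ∏ i ∈ range m, (1 - (PowerSeries.X : PowerSeries (ZMod 7)) ^ (i + 1))⁻¹

noncomputable def QQ (m : ℕ) : PowerSeries (ZMod 7) :=
  ∏ i ∈ range m, (1 - (PowerSeries.X : PowerSeries (ZMod 7)) ^ (7 * (i + 1)))

lemma pi_E (m : ℕ) : π (E m) = PP m := by
  rw [E, PP, map_prod]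
  refine Finset.prod_congr rfl fun i _ => ?_
  rw [map_sub, map_one, map_pow, pi_X]

lemma FP_one (m : ℕ) : FF m * PP m = 1 := by
  rw [FF, PP, ← Finset.prod_mul_distrib]
  rw [Finset.prod_congr rfl fun i (_ : i ∈ range m) => PowerSeries.inv_mul_cancel _ ?_]
  · exact Finset.prod_const_one
  · simp

lemma P7 (m : ℕ) : PP m ^ 7 = QQ m := by
  haveI : Fact (Nat.Prime 7) := ⟨by norm_num⟩
  haveI : CharP (PowerSeries (ZMod 7)) 7 :=
    charP_of_injective_ringHom PowerSeries.C_injective 7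
  rw [PP, QQ, ← Finset.prod_pow]
  refine Finset.prod_congr rfl fun i _ => ?_
  rw [sub_pow_char, one_pow, ← pow_mul, mul_comm (i + 1) 7]

lemma QQ_coeff_zero (m : ℕ) : ∀ d : ℕ, ¬ 7 ∣ d → PowerSeries.coeff d (QQ m) = 0 := by
  induction m with
  | zero =>
    intro d hd
    rw [QQ, prod_range_zero, PowerSeries.coeff_one, if_neg (by omega)]
  | succ m ih =>
    intro d hd
    rw [QQ, prod_range_succ, ← QQ, PowerSeries.coeff_mul]
    refine Finset.sum_eq_zero ?_
    rintro ⟨x, y⟩ hxy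
    rw [Finset.HasAntidiagonal.mem_antidiagonal] at hxy
    by_cases hy : 7 ∣ y
    · have hx : ¬ 7 ∣ x := by omega
      rw [ih x hx, zero_mul]
    · have hy0 : y ≠ 0 := by omega
      have hyc : y ≠ 7 * (m + 1) := fun h => hy (h ▸ ⟨m + 1, rfl⟩)
      rw [map_sub, PowerSeries.coeff_one, if_neg hy0, PowerSeries.coeff_X_pow, if_neg hyc]
      simp

lemma QQ_coeff_zero' (m : ℕ) : PowerSeries.coeff 0 (QQ m) = 1 := by
  rw [QQ, PowerSeries.coeff_zero_eq_constantCoeff, map_prod]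
  refine Finset.prod_eq_one fun i _ => ?_
  simp

lemma P3_coeff (m x : ℕ) (hx : x + 1 < m) :
    PowerSeries.coeff x (PP m ^ 3) = PowerSeries.coeff x (π (Jp m)) := by
  have h : PP m ^ 3 = π (E m ^ 3) := by rw [map_pow, pi_E]
  rw [h, pi_coeff, pi_coeff, jacobi_coeff m x hx]

lemma JJ_coeff (m d : ℕ) (hd : d % 7 = 5) :
    PowerSeries.coeff d (π (Jp m) * π (Jp m)) = 0 := by
  rw [Jp, map_sum, Finset.sum_mul_sum, map_sum]
  refine Finset.sum_eq_zero fun j _ => ?_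
  rw [map_sum]
  refine Finset.sum_eq_zero fun k _ => ?_
  have hterm : π (C ((-1) ^ j * (2 * (j : ℤ) + 1)) * X ^ tri j) *
      π (C ((-1) ^ k * (2 * (k : ℤ) + 1)) * X ^ tri k) =
      PowerSeries.C
        ((((-1) ^ j * (2 * (j : ℤ) + 1) * ((-1) ^ k * (2 * (k : ℤ) + 1)) : ℤ)) : ZMod 7) *
        (PowerSeries.X : PowerSeries (ZMod 7)) ^ (tri j + tri k) := by
    have hCX : ∀ (a : ℤ) (t : ℕ), π (C a * X ^ t) =
        PowerSeries.C ((a : ZMod 7)) * PowerSeries.X ^ t := by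
      intro a t
      rw [map_mul, map_pow, pi_C, pi_X]
    rw [hCX, hCX, pow_add]
    simp only [Int.cast_mul, Int.cast_pow, Int.cast_add, Int.cast_one, Int.cast_neg,
      Int.cast_ofNat, Int.cast_natCast, map_mul, map_pow, map_add, map_one, map_neg]
    ring
  rw [hterm, PowerSeries.coeff_C_mul, PowerSeries.coeff_X_pow]
  by_cases hjk : d = tri j + tri k
  · rw [if_pos hjk, mul_one]
    have hkey := key7 j k d hjk.symm hd
    push_cast
    linear_combination ((-1 : ZMod 7)) ^ j * (-1) ^ k * hkey
  · rw [if_neg hjk, mul_zero]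

lemma P6_coeff (m d : ℕ) (hd5 : d % 7 = 5) (hdm : d + 2 < m) :
    PowerSeries.coeff d (PP m ^ 6) = 0 := by
  have h6 : PP m ^ 6 = PP m ^ 3 * PP m ^ 3 := by ring
  rw [h6, PowerSeries.coeff_mul]
  have hcong : ∀ xy ∈ Finset.HasAntidiagonal.antidiagonal d,
      PowerSeries.coeff xy.1 (PP m ^ 3) * PowerSeries.coeff xy.2 (PP m ^ 3) =
      PowerSeries.coeff xy.1 (π (Jp m)) *
        PowerSeries.coeff xy.2 (π (Jp m)) := by
    rintro ⟨x, y⟩ hxy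
    rw [Finset.HasAntidiagonal.mem_antidiagonal] at hxy
    rw [P3_coeff m x (by omega), P3_coeff m y (by omega)]
  rw [Finset.sum_congr rfl hcong, ← PowerSeries.coeff_mul, JJ_coeff m d hd5]

lemma FQ (m : ℕ) : FF m * QQ m = PP m ^ 6 := by
  rw [← P7]
  calc FF m * PP m ^ 7 = (FF m * PP m) * PP m ^ 6 := by ring
    _ = PP m ^ 6 := by rw [FP_one, one_mul]

lemma FF_vanish (m : ℕ) : ∀ j : ℕ, 7 * j + 7 < m →
    PowerSeries.coeff (7 * j + 5) (FF m) = 0 := by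
  intro j
  induction j using Nat.strong_induction_on with
  | _ j ih =>
    intro hj
    have h1 : PowerSeries.coeff (7 * j + 5) (FF m * QQ m) = 0 := by
      rw [FQ]
      exact P6_coeff m (7 * j + 5) (by omega) (by omega)
    rw [PowerSeries.coeff_mul, Finset.sum_eq_single ((7 * j + 5 : ℕ), (0 : ℕ))] at h1
    · rwa [QQ_coeff_zero', mul_one] at h1
    · rintro ⟨x, y⟩ hxy hne
      rw [Finset.HasAntidiagonal.mem_antidiagonal] at hxy
      by_cases hy : 7 ∣ y
      · obtain ⟨k, rfl⟩ := hy
        rcases Nat.eq_zero_or_pos k with rfl | hk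
        · have hx0 : x = 7 * j + 5 := by omega
          exact (hne (by rw [hx0])).elim
        · have hkj : k ≤ j := by omega
          have hx : x = 7 * (j - k) + 5 := by omega
          have hlt : j - k < j := by omega
          have hm2 : 7 * (j - k) + 7 < m := by omega
          rw [hx, ih _ hlt hm2, zero_mul]
      · rw [QQ_coeff_zero m y hy, mul_zero]
    · intro hmem
      exact (hmem (Finset.HasAntidiagonal.mem_antidiagonal.mpr (by omega))).elim

end Assembly
open scoped Classical in
lemma card_eq_gf (N m : ℕ) (hm : N ≤ m) :
    (Fintype.card (Nat.Partition N) : ZMod 7) = PowerSeries.coeff N (FF m) := by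
  have hcard : Fintype.card (Nat.Partition N) =
      #{p : Nat.Partition N | (∀ j, p.parts.count j ∈ (Set.univ : Set ℕ)) ∧
        ∀ j ∈ p.parts, j ∈ (range m).map ⟨Nat.succ, Nat.succ_injective⟩} := by
    rw [← Finset.card_univ]
    congr 1
    symm
    apply Finset.filter_true_of_mem
    intro p _
    refine ⟨fun j => Set.mem_univ _, fun j hj => ?_⟩
    rw [Finset.mem_map]
    have hpos : 0 < j := p.parts_pos hj
    have hle : j ≤ N := by
      have h := Multiset.single_le_sum (fun _ _ => Nat.zero_le _) j hj
      rwa [p.parts_sum] at h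
    exact ⟨j - 1, Finset.mem_range.mpr (by omega), by
      simp only [Function.Embedding.coeFn_mk]
      omega⟩
  rw [hcard, FF]
  convert Theorems100.partialGF_prop (ZMod 7) N ((range m).map ⟨Nat.succ, Nat.succ_injective⟩)
    (by rintro i hi
        rw [Finset.mem_map] at hi
        obtain ⟨a, -, rfl⟩ := hi
        exact Nat.succ_pos a)
    (fun _ => Set.univ) (fun _ _ => trivial) using 2
  rw [Finset.prod_map]
  refine Finset.prod_congr rfl fun i _ => ?_
  have hset : ((· * Nat.succ i) '' Set.univ : Set ℕ) = {k | i + 1 ∣ k} := by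
    ext k
    simp only [Set.mem_image, Set.mem_univ, true_and, Set.mem_setOf_eq]
    constructor
    · rintro ⟨p, rfl⟩
      exact Dvd.intro_left p rfl
    · rintro ⟨c, rfl⟩
      exact ⟨c, mul_comm _ _⟩
  rw [Theorems100.num_series']
  simp only [Function.Embedding.coeFn_mk]
  rw [hset]

end RamaSeven

/-- Ramanujan's congruence `p(7n+5) ≡ 0 (mod 7)` for the partition function. -/
theorem partition_congruence_mod_seven (n : ℕ) :
    Fintype.card (Nat.Partition (7 * n + 5)) % 7 = 0 := by
  have h : (Fintype.card (Nat.Partition (7 * n + 5)) : ZMod 7) = 0 := by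
    rw [RamaSeven.card_eq_gf (7 * n + 5) (7 * n + 13) (by omega)]
    exact RamaSeven.FF_vanish (7 * n + 13) n (by omega)
  rw [ZMod.natCast_eq_zero_iff] at h
  omega
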